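/- arXiv:2012.03239 — 2 statements merged into one kernel-verified Lean document; each statement's English description precedes it below -/
import Mathlib

section
/- For every natural number n, the alternating binomial sum ∑_{k=1}^{n} (-1)^{k+1} · C(n,k)/k equals the n-th harmonic number H_n = ∑_{k=1}^{n} 1/k. Equivalently, as formal power series, e^z · Ein(z) = ∑_{p≥1} H_p z^p/p!, where Ein(z) = ∑_{k≥1} (-1)^{k+1} z^k/(k·k!). -/
lemma alt_choose_sum (n : ℕ) :
    ∑ k ∈ Finset.Icc 1 (n+1), (-1 : ℚ)^(k+1) * ((n+1).choose k : ℚ) = 1 := by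
  have h := Int.alternating_sum_range_choose (n := n+1)
  simp only [Nat.succ_ne_zero, if_false] at h
  have h2 : ∑ k ∈ Finset.range (n+2), (-1 : ℚ)^k * ((n+1).choose k : ℚ) = 0 := by
    have h2 := congrArg (fun z : ℤ => (z : ℚ)) h
    push_cast at h2
    convert h2 using 2
  have h3 : Finset.range (n+2) = insert 0 (Finset.Icc 1 (n+1)) := by
    ext x; simp; omega
  rw [h3, Finset.sum_insert (by simp)] at h2
  simp only [pow_zero, Nat.choose_zero_right, Nat.cast_one, one_mul] at h2
  have h4 : ∑ k ∈ Finset.Icc 1 (n+1), (-1 : ℚ)^(k+1) * ((n+1).choose k : ℚ)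
      = - ∑ k ∈ Finset.Icc 1 (n+1), (-1 : ℚ)^k * ((n+1).choose k : ℚ) := by
    rw [← Finset.sum_neg_distrib]
    exact Finset.sum_congr rfl (fun k _ => by ring)
  rw [h4]; linarith

/-- The alternating binomial sum `∑_{k=1}^n (-1)^{k+1} C(n,k)/k` equals the
`n`-th harmonic number `H_n = ∑_{k=1}^n 1/k`. -/
theorem alternating_binomial_harmonic (n : ℕ) :
    (∑ k ∈ Finset.Icc 1 n, (-1 : ℚ)^(k+1) * (Nat.choose n k : ℚ) / k)
      = ∑ k ∈ Finset.Icc 1 n, (1 : ℚ) / k := by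
  induction n with
  | zero => simp
  | succ n ih =>
    have term : ∀ k ∈ Finset.Icc 1 (n+1),
        (-1 : ℚ)^(k+1) * ((n+1).choose k : ℚ) / k
          = (-1 : ℚ)^(k+1) * (n.choose k : ℚ) / k
            + (-1 : ℚ)^(k+1) * ((n+1).choose k : ℚ) / (n+1) := by
      intro k hk
      obtain ⟨j, rfl⟩ : ∃ j, k = j + 1 := by
        rcases Finset.mem_Icc.mp hk with ⟨h1, _⟩; exact ⟨k - 1, by omega⟩
      have hp : ((n+1).choose (j+1) : ℚ) = (n.choose (j+1) : ℚ) + (n.choose j : ℚ) := by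
        rw [Nat.choose_succ_succ]; push_cast; ring
      have hm : ((j : ℚ) + 1) * ((n+1).choose (j+1) : ℚ) = ((n : ℚ)+1) * (n.choose j : ℚ) := by
        have := Nat.add_one_mul_choose_eq n j
        have : ((n+1) * n.choose j : ℕ) = ((n+1).choose (j+1) * (j+1) : ℕ) := this
        exact_mod_cast by push_cast [this]; ring
      have hj : ((j : ℚ) + 1) ≠ 0 := by positivity
      have hn : ((n : ℚ) + 1) ≠ 0 := by positivity
      push_cast
      field_simp
      linear_combination ((n:ℚ)+1) * hp - hm
    rw [Finset.sum_congr rfl term, Finset.sum_add_distrib]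
    have s1 : ∑ k ∈ Finset.Icc 1 (n+1), (-1 : ℚ)^(k+1) * (n.choose k : ℚ) / k
        = ∑ k ∈ Finset.Icc 1 n, (-1 : ℚ)^(k+1) * (n.choose k : ℚ) / k := by
      rw [Finset.sum_Icc_succ_top (by omega)]
      simp [Nat.choose_succ_self]
    have s2 : ∑ k ∈ Finset.Icc 1 (n+1), (-1 : ℚ)^(k+1) * ((n+1).choose k : ℚ) / (n+1)
        = 1 / (n+1) := by
      rw [← Finset.sum_div, alt_choose_sum]
    rw [s1, s2, ih, Finset.sum_Icc_succ_top (by omega : 1 ≤ n + 1)]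
    push_cast; ring
end

section
/- Let u¹, u² be distinct complex numbers, U = diag(u¹,u²), V = [[0, i/2],[-i/2, 0]]. Define R₀ = I and for k ≥ 1, R_k = ((1/2)_{k-1}(1/2)_k / k!) · [[ (-1)^{k+1}/2, k·i ],[ (-1)^{k+1}·k·i, -1/2 ]] · (u²-u¹)^{-k}. Then for all k ≥ 0 the recursion [R_{k+1}, U] = (V + k·I)·R_k holds. -/
open Matrix

/-- The `R`-matrix coefficients of the Catalan Frobenius manifold:
`R₀ = I` and, for `k ≥ 1`,
`R_k = ((1/2)_{k-1}(1/2)_k / k!) [[(-1)^{k+1}/2, k i],[(-1)^{k+1} k i, -1/2]] (u²-u¹)^{-k}`. -/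
noncomputable def Rcat (u1 u2 : ℂ) : ℕ → Matrix (Fin 2) (Fin 2) ℂ
  | 0 => 1
  | (m+1) =>
      (((ascPochhammer ℂ m).eval (1/2) * (ascPochhammer ℂ (m+1)).eval (1/2)
          / (Nat.factorial (m+1) : ℂ)) * (u2 - u1)^(-(m+1 : ℤ))) •
        !![(-1 : ℂ)^(m+2)/2, (m+1 : ℂ) * Complex.I;
           (-1 : ℂ)^(m+2) * (m+1 : ℂ) * Complex.I, -1/2]

set_option maxHeartbeats 2000000
/-- The explicit matrices `R_k` satisfy the recursion `[R_{k+1}, U] = (V + k)R_k`: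
the base case `[R₁,U] = V R₀` and, for all `k ≥ 1`,
`[R_{k+1},U] = (V + k·I) R_k`. -/
theorem R_matrix_recursion (u1 u2 : ℂ) (h : u1 ≠ u2) :
    let U : Matrix (Fin 2) (Fin 2) ℂ := !![u1, 0; 0, u2]
    let V : Matrix (Fin 2) (Fin 2) ℂ := !![0, Complex.I/2; -Complex.I/2, 0]
    (Rcat u1 u2 1 * U - U * Rcat u1 u2 1 = V * Rcat u1 u2 0) ∧
    (∀ k : ℕ, 1 ≤ k →
      Rcat u1 u2 (k+1) * U - U * Rcat u1 u2 (k+1)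
        = (V + (k : ℂ) • (1 : Matrix (Fin 2) (Fin 2) ℂ)) * Rcat u1 u2 k) := by
  obtain ⟨d, hd, rfl⟩ : ∃ d, d ≠ 0 ∧ u2 = u1 + d :=
    ⟨u2 - u1, sub_ne_zero.mpr h.symm, by ring⟩
  intro U V
  have hdiff : u1 + d - u1 = d := by ring
  constructor
  · show Rcat u1 (u1+d) 1 * U - U * Rcat u1 (u1+d) 1 = V * Rcat u1 (u1+d) 0
    simp only [Rcat, hdiff]
    ext i j
    fin_cases i <;> fin_cases j <;>
      simp [Matrix.mul_apply, Fin.sum_univ_succ, Matrix.one_apply, U, V,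
        ascPochhammer_succ_eval, _root_.zpow_neg, zpow_one] <;>
      field_simp <;> ring
  · intro k hk
    obtain ⟨m, rfl⟩ : ∃ m, k = m + 1 := ⟨k - 1, (Nat.succ_pred_eq_of_pos hk).symm⟩
    simp only [Rcat, hdiff]
    have hfac : ((m+1).factorial : ℂ) ≠ 0 := Nat.cast_ne_zero.mpr (Nat.factorial_ne_zero _)
    have hm2 : (m:ℂ) + 2 ≠ 0 := by
      have h2 : ((m+2:ℕ):ℂ) ≠ 0 := Nat.cast_ne_zero.mpr (by omega)
      push_cast at h2; exact h2
    have hz1 : d^(-(m+1 : ℤ)) = (d^m)⁻¹ * d⁻¹ := by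
      rw [_root_.zpow_neg, ← mul_inv, ← pow_succ]; norm_cast
    have hz2 : d^(-(m+1+1 : ℤ)) = (d^m)⁻¹ * d⁻¹ * d⁻¹ := by
      rw [_root_.zpow_neg, ← mul_inv, ← mul_inv, ← pow_succ, ← pow_succ]; norm_cast
    have hp2 : (ascPochhammer ℂ (m+1+1)).eval (1/2)
        = (ascPochhammer ℂ (m+1)).eval (1/2) * (1/2 + ((m:ℂ)+1)) := by
      rw [ascPochhammer_succ_eval]; norm_cast
    have hp1 : (ascPochhammer ℂ (m+1)).eval (1/2)
        = (ascPochhammer ℂ m).eval (1/2) * (1/2 + (m:ℂ)) := by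
      rw [ascPochhammer_succ_eval]
    have hf2 : ((m+1+1).factorial : ℂ) = ((m:ℂ)+2) * ((m+1).factorial : ℂ) := by
      rw [Nat.factorial_succ]; push_cast; ring
    push_cast
    rw [hz1, hz2, hp2, hf2, hp1]
    set p := (ascPochhammer ℂ m).eval (1/2) with hP
    set f := ((m+1).factorial : ℂ) with hF
    generalize (d^m)⁻¹ = qi
    ext i j
    fin_cases i <;> fin_cases j <;>
      simp only [Matrix.mul_apply, Matrix.sub_apply, Matrix.add_apply, Matrix.smul_apply,
        Matrix.one_apply, Fin.sum_univ_succ, Finset.sum_empty, Fin.isValue,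
        Matrix.cons_val', Matrix.cons_val_zero, Matrix.cons_val_one, Matrix.head_cons,
        Matrix.head_fin_const, Matrix.empty_val', Matrix.cons_val_fin_one,
        Finset.univ_unique, Fin.default_eq_zero, Finset.sum_singleton, smul_eq_mul,
        if_true, if_false, Fin.zero_eta, Fin.mk_one, ne_eq, one_ne_zero,
        not_false_eq_true, zero_ne_one, ite_true, ite_false, U, V,
          Matrix.of_apply, Matrix.cons_val_succ, Fin.succ_zero_eq_one] <;>
      (field_simp [hd, hfac, hm2]
       try ring_nf
       try simp only [Complex.I_sq]
       try ring_nf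
       try field_simp [hd, hfac, hm2]
       try ring)
end
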